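/- (Sufficiency in Theorem 2, part 1.) Suppose there exists a unit vector u ∈ ℂ^m with G u = λ_min u (u is an eigenvector of the Gram matrix for its smallest eigenvalue) such that |u_i|² = η_i for every i. Then the equal-probability measurement is optimal: the constant vector p_i = λ_min is primal feasible, and Σ_i η_i p'_i ≤ λ_min for every primal feasible p'; in particular the maximal detection probability equals λ_min. -/

import Mathlib

open Matrix BigOperators ComplexOrder

noncomputable section

/-- The reciprocal states: columns of `Φ (ΦᴴΦ)⁻¹`. -/
def reciprocal {r m : ℕ} (Φ : Matrix (Fin r) (Fin m) ℂ) : Matrix (Fin r) (Fin m) ℂ :=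
  Φ * (Φᴴ * Φ)⁻¹

/-- The rank-one operator `Q_i = φ̃_i φ̃_iᴴ`. -/
def Qop {r m : ℕ} (Φ : Matrix (Fin r) (Fin m) ℂ) (i : Fin m) : Matrix (Fin r) (Fin r) ℂ :=
  vecMulVec (fun a => reciprocal Φ a i) (fun b => star (reciprocal Φ b i))

/-- `p` is primal feasible: `p_i ≥ 0` and `I - Σ p_i Q_i ⪰ 0`. -/
def PrimalFeasible {r m : ℕ} (Φ : Matrix (Fin r) (Fin m) ℂ) (p : Fin m → ℝ) : Prop :=
  (∀ i, 0 ≤ p i) ∧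
    ((1 : Matrix (Fin r) (Fin r) ℂ) - ∑ i : Fin m, (p i : ℂ) • Qop Φ i).PosSemidef

/-- `(X, z)` is dual feasible: `X ⪰ 0`, `z_i ≥ 0` and `Re Tr(Q_i X) = η_i + z_i`. -/
def DualFeasible {r m : ℕ} (Φ : Matrix (Fin r) (Fin m) ℂ) (η : Fin m → ℝ)
    (X : Matrix (Fin r) (Fin r) ℂ) (z : Fin m → ℝ) : Prop :=
  X.PosSemidef ∧ (∀ i, 0 ≤ z i) ∧ ∀ i, (Matrix.trace (Qop Φ i * X)).re = η i + z i

lemma sum_Qop {r m : ℕ} (Φ : Matrix (Fin r) (Fin m) ℂ) :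
    ∑ i : Fin m, Qop Φ i = reciprocal Φ * (reciprocal Φ)ᴴ := by
  ext a b
  simp [Qop, vecMulVec_apply, Matrix.mul_apply, Matrix.sum_apply, conjTranspose_apply]

theorem stmt_8 (m r : ℕ) (hm : 0 < m) (hmr : m ≤ r)
    (Φ : Matrix (Fin r) (Fin m) ℂ)
    (hind : LinearIndependent ℂ (fun i : Fin m => fun j : Fin r => Φ j i))
    (η : Fin m → ℝ) (hη : ∀ i, 0 ≤ η i) (hη1 : ∑ i : Fin m, η i = 1)
    (lam : ℝ)
    -- `lam` is the smallest eigenvalue of the Gram matrix `ΦᴴΦ`: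
    (hev : ∃ u : Fin m → ℂ, u ≠ 0 ∧ (Φᴴ * Φ).mulVec u = (lam : ℂ) • u)
    (hmin : ((Φᴴ * Φ) - (lam : ℂ) • 1).PosSemidef)
    -- `u` is a unit eigenvector of `ΦᴴΦ` for `lam` with `|u_i|² = η_i`:
    (u : Fin m → ℂ) (hunit : ∑ i : Fin m, ‖u i‖ ^ 2 = 1)
    (hu : (Φᴴ * Φ).mulVec u = (lam : ℂ) • u)
    (hup : ∀ i, ‖u i‖ ^ 2 = η i) :
    PrimalFeasible Φ (fun _ => lam) ∧
      ∀ p' : Fin m → ℝ, PrimalFeasible Φ p' → ∑ i : Fin m, η i * p' i ≤ lam := by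
  classical
  set G := Φᴴ * Φ with hGdef
  set R := reciprocal Φ with hRdef
  -- G is positive definite
  have hGH : G.IsHermitian := isHermitian_conjTranspose_mul_self Φ
  have hΦinj : Function.Injective Φ.mulVec := by
    rw [Matrix.mulVec_injective_iff]
    exact hind
  have hGPD : G.PosDef := by
    refine Matrix.PosDef.of_dotProduct_mulVec_pos hGH fun x hx => ?_
    have hx' : Φ *ᵥ x ≠ 0 := by
      intro h
      exact hx (hΦinj (by simpa using h))
    have : star x ⬝ᵥ G *ᵥ x = star (Φ *ᵥ x) ⬝ᵥ (Φ *ᵥ x) := by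
      rw [star_mulVec, ← Matrix.dotProduct_mulVec, Matrix.mulVec_mulVec]
    rw [this]
    exact Matrix.dotProduct_star_self_pos_iff.mpr hx'
  have hdet : IsUnit G.det := Matrix.isUnit_iff_isUnit_det _ |>.mp hGPD.isUnit
  have hinvmul : G⁻¹ * G = 1 := Matrix.nonsing_inv_mul G hdet
  have hmulinv : G * G⁻¹ = 1 := Matrix.mul_nonsing_inv G hdet
  have hRH : Rᴴ = G⁻¹ * Φᴴ := by
    rw [hRdef, reciprocal, ← hGdef, conjTranspose_mul, hGH.inv.eq]
  have hRΦ : Rᴴ * Φ = 1 := by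
    rw [hRH, Matrix.mul_assoc, ← hGdef, hinvmul]
  -- star u ⬝ᵥ u = 1
  have hsu : star u ⬝ᵥ u = 1 := by
    have : star u ⬝ᵥ u = ((∑ i : Fin m, ‖u i‖ ^ 2 : ℝ) : ℂ) := by
      push_cast
      simp only [dotProduct, Pi.star_apply, Complex.star_def]
      exact Finset.sum_congr rfl fun i _ => (Complex.conj_mul' (u i))
    rw [this, hunit, Complex.ofReal_one]
  -- star u ⬝ᵥ G *ᵥ u = lam
  have hGu : star u ⬝ᵥ G *ᵥ u = (lam : ℂ) := by
    rw [hu, dotProduct_smul, hsu, smul_eq_mul, mul_one]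
  -- lam ≥ 0
  have hlam0 : 0 ≤ lam := by
    have h := (Matrix.posSemidef_conjTranspose_mul_self Φ).dotProduct_mulVec_nonneg u
    rw [← hGdef, hGu] at h
    exact Complex.zero_le_real.mp h
  -- The projection P
  set P := R * Φᴴ with hPdef
  have hPH : Pᴴ = P := by
    rw [hPdef, conjTranspose_mul, conjTranspose_conjTranspose, hRH, hRdef, reciprocal,
      ← hGdef, Matrix.mul_assoc]
  have hΦR : Φᴴ * R = 1 := by
    rw [hRdef, reciprocal, ← Matrix.mul_assoc, ← hGdef, hmulinv]
  have hPP : P * P = P := by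
    rw [hPdef, Matrix.mul_assoc, ← Matrix.mul_assoc Φᴴ R, hΦR, Matrix.one_mul]
  have hRGR : R * (G - (lam : ℂ) • 1) * Rᴴ = P - (lam : ℂ) • (R * Rᴴ) := by
    have hGRH : G * Rᴴ = Φᴴ := by
      rw [hRH, ← Matrix.mul_assoc, hmulinv, Matrix.one_mul]
    rw [Matrix.mul_sub, Matrix.sub_mul, Matrix.mul_smul, Matrix.mul_one, Matrix.smul_mul,
      Matrix.mul_assoc, hGRH, hPdef]
  have h1P : (1 - P)ᴴ * (1 - P) = 1 - P := by
    rw [conjTranspose_sub, conjTranspose_one, hPH, Matrix.sub_mul, Matrix.one_mul,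
      Matrix.mul_sub, Matrix.mul_one, hPP]
    abel
  have hfeas : PrimalFeasible Φ (fun _ => lam) := by
    refine ⟨fun _ => hlam0, ?_⟩
    have hkey : (1 : Matrix (Fin r) (Fin r) ℂ) - ∑ i : Fin m, ((lam : ℝ) : ℂ) • Qop Φ i
        = (1 - P)ᴴ * (1 - P) + R * (G - (lam : ℂ) • 1) * Rᴴ := by
      rw [← Finset.smul_sum, sum_Qop, ← hRdef, h1P, hRGR]
      abel
    rw [hkey]
    exact ((Matrix.posSemidef_conjTranspose_mul_self _).add
      (hmin.mul_mul_conjTranspose_same R))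
  refine ⟨hfeas, ?_⟩
  intro p hp
  set w := Φ *ᵥ u with hwdef
  have hRw : Rᴴ *ᵥ w = u := by
    rw [hwdef, Matrix.mulVec_mulVec, hRΦ, Matrix.one_mulVec]
  -- star w ⬝ᵥ Qop i *ᵥ w = ‖u i‖²
  have hQw : ∀ i, star w ⬝ᵥ (Qop Φ i *ᵥ w) = ((‖u i‖ ^ 2 : ℝ) : ℂ) := by
    intro i
    have hy : star (fun b => R b i) ⬝ᵥ w = u i := by
      have := congrFun hRw i
      simpa [Matrix.mulVec, dotProduct, conjTranspose_apply, Pi.star_apply] using this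
    have hQmv : Qop Φ i *ᵥ w = (star (fun b => R b i) ⬝ᵥ w) • (fun a => R a i) := by
      funext a
      simp only [Qop, ← hRdef, Matrix.mulVec, Matrix.vecMulVec_apply, dotProduct,
        Pi.smul_apply, smul_eq_mul, Pi.star_apply, Finset.sum_mul]
      exact Finset.sum_congr rfl fun y _ => by ring
    rw [hQmv, hy]
    have hx : star w ⬝ᵥ (fun a => R a i) = star (u i) := by
      rw [star_dotProduct]
      exact congrArg star hy
    rw [dotProduct_smul, hx, smul_eq_mul]
    simpa [Complex.ofReal_pow] using Complex.mul_conj' (u i)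
  -- star w ⬝ᵥ w = lam
  have hww : star w ⬝ᵥ w = (lam : ℂ) := by
    rw [hwdef, star_mulVec, ← Matrix.dotProduct_mulVec, Matrix.mulVec_mulVec, ← hGdef, hGu]
  obtain ⟨hp0, hpsd⟩ := hp
  have h := hpsd.dotProduct_mulVec_nonneg w
  have hcalc : star w ⬝ᵥ ((1 - ∑ i : Fin m, ((p i : ℝ) : ℂ) • Qop Φ i) *ᵥ w)
      = ((lam - ∑ i : Fin m, p i * ‖u i‖ ^ 2 : ℝ) : ℂ) := by
    rw [Matrix.sub_mulVec, dotProduct_sub, Matrix.one_mulVec, hww]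
    have hmv : (∑ i : Fin m, ((p i : ℝ) : ℂ) • Qop Φ i) *ᵥ w
        = ∑ i : Fin m, (((p i : ℝ) : ℂ) • Qop Φ i) *ᵥ w :=
      map_sum (AddMonoidHom.mk' (fun A : Matrix (Fin r) (Fin r) ℂ => A *ᵥ w)
        (fun A B => Matrix.add_mulVec A B w)) _ Finset.univ
    have hdp : star w ⬝ᵥ (∑ i : Fin m, (((p i : ℝ) : ℂ) • Qop Φ i) *ᵥ w)
        = ∑ i : Fin m, star w ⬝ᵥ ((((p i : ℝ) : ℂ) • Qop Φ i) *ᵥ w) :=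
      map_sum (AddMonoidHom.mk' (fun x : Fin r → ℂ => star w ⬝ᵥ x)
        (fun a b => dotProduct_add _ a b)) _ Finset.univ
    rw [hmv, hdp]
    have : ∀ i ∈ Finset.univ, star w ⬝ᵥ ((((p i : ℝ) : ℂ) • Qop Φ i) *ᵥ w)
        = ((p i * ‖u i‖ ^ 2 : ℝ) : ℂ) := by
      intro i _
      rw [Matrix.smul_mulVec, dotProduct_smul, hQw i, smul_eq_mul]
      push_cast
      ring
    rw [Finset.sum_congr rfl this]
    push_cast
    ring
  rw [hcalc] at h
  have hle : 0 ≤ lam - ∑ i : Fin m, p i * ‖u i‖ ^ 2 := Complex.zero_le_real.mp h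
  have : ∑ i : Fin m, η i * p i = ∑ i : Fin m, p i * ‖u i‖ ^ 2 := by
    apply Finset.sum_congr rfl
    intro i _
    rw [hup i, mul_comm]
  linarith
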